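/- Let Γ be a group acting on a set C such that the set of orbits C/Γ is finite, and suppose Γ is finitely generated. Then the group Δ⁰_C of degree-zero divisors on C (formal ℤ-linear combinations of elements of C with coefficient sum zero) is finitely generated as a module over the group ring ℤ[Γ]. -/

import Mathlib

/-- Let `Γ` be a finitely generated group acting on a set `C` with finitely
many orbits.  Then the group `Δ⁰_C` of degree-zero divisors on `C` (finitely supported
`ℤ`-valued functions on `C` whose coefficients sum to zero) is finitely generated as a
module over the group ring `ℤ[Γ]`: there are finitely many degree-zero divisors whose
`Γ`-translates generate `Δ⁰_C` as an abelian group. -/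
theorem stmt3 {Γ C : Type*} [Group Γ] [MulAction Γ C]
    (horb : Finite (MulAction.orbitRel.Quotient Γ C))
    (hfg : Group.FG Γ) :
    ∃ S : Finset (C →₀ ℤ),
      (∀ D ∈ S, D.sum (fun _ n => n) = 0) ∧
      ∀ D : C →₀ ℤ, D.sum (fun _ n => n) = 0 →
        D ∈ AddSubgroup.closure
          {E : C →₀ ℤ | ∃ γ : Γ, ∃ D₀ ∈ S, E = Finsupp.mapDomain (fun c => γ • c) D₀} := by
  classical
  rcases isEmpty_or_nonempty C with hC | hC
  · refine ⟨∅, by simp, fun D hD => ?_⟩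
    have hD0 : D = 0 := Finsupp.ext fun c => hC.elim c
    simp [hD0]
  · obtain ⟨c₀⟩ := hC
    obtain ⟨T, hT⟩ := hfg.out
    haveI : Fintype (MulAction.orbitRel.Quotient Γ C) := Fintype.ofFinite _
    set e : C → (C →₀ ℤ) := fun c => Finsupp.single c 1 - Finsupp.single c₀ 1 with he
    set S : Finset (C →₀ ℤ) :=
      (Finset.univ.image fun q : MulAction.orbitRel.Quotient Γ C => e q.out) ∪
      (T.image fun t => e (t • c₀)) with hS
    refine ⟨S, ?_, ?_⟩
    · -- each element of S has degree zero
      have hdeg : ∀ c : C, (e c).sum (fun _ n => n) = 0 := by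
        intro c
        rw [he]
        rw [Finsupp.sum_sub_index (fun a b₁ b₂ => rfl)]
        simp [Finsupp.sum_single_index]
      intro D hD
      simp only [hS, Finset.mem_union, Finset.mem_image] at hD
      rcases hD with ⟨q, _, rfl⟩ | ⟨t, _, rfl⟩ <;> exact hdeg _
    · set H := AddSubgroup.closure
        {E : C →₀ ℤ | ∃ γ : Γ, ∃ D₀ ∈ S, E = Finsupp.mapDomain (fun c => γ • c) D₀} with hH
      have hgen : ∀ (γ : Γ) (D₀ : C →₀ ℤ), D₀ ∈ S →
          Finsupp.mapDomain (fun c => γ • c) D₀ ∈ H :=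
        fun γ D₀ h => AddSubgroup.subset_closure ⟨γ, D₀, h, rfl⟩
      have hmape : ∀ (γ : Γ) (a : C), Finsupp.mapDomain (fun c => γ • c) (e a)
          = Finsupp.single (γ • a) 1 - Finsupp.single (γ • c₀) 1 := by
        intro γ a
        rw [he]
        have := (Finsupp.mapDomain.addMonoidHom (M := ℤ) (fun c : C => γ • c)).map_sub
          (Finsupp.single a 1) (Finsupp.single c₀ 1)
        simp only [Finsupp.mapDomain.addMonoidHom_apply] at this
        rw [this, Finsupp.mapDomain_single, Finsupp.mapDomain_single]
      have hstab : ∀ (γ : Γ) (x : C →₀ ℤ), x ∈ H →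
          Finsupp.mapDomain (fun c => γ • c) x ∈ H := by
        intro γ x hx
        induction hx using AddSubgroup.closure_induction with
        | mem y hy =>
          obtain ⟨δ, D₀, hD₀, rfl⟩ := hy
          rw [← Finsupp.mapDomain_comp]
          have hcomp : ((fun c : C => γ • c) ∘ fun c : C => δ • c)
              = fun c : C => (γ * δ) • c := by
            funext c; simp [mul_smul]
          rw [hcomp]
          exact hgen _ _ hD₀
        | zero => simpa using H.zero_mem
        | add a b _ _ ha hb =>
          rw [Finsupp.mapDomain_add]; exact H.add_mem ha hb
        | neg a _ ha =>
          have := (Finsupp.mapDomain.addMonoidHom (M := ℤ) (fun c : C => γ • c)).map_neg a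
          simp only [Finsupp.mapDomain.addMonoidHom_apply] at this
          rw [this]
          exact H.neg_mem ha
      have hSH : ∀ D₀ ∈ S, D₀ ∈ H := by
        intro D₀ h
        have := hgen 1 D₀ h
        rwa [show (fun c : C => (1:Γ) • c) = id from funext fun c => one_smul _ _,
          Finsupp.mapDomain_id] at this
      -- translates of c₀
      have hA : ∀ γ : Γ, e (γ • c₀) ∈ H := by
        intro γ
        have hγ : γ ∈ Subgroup.closure (T : Set Γ) := hT ▸ Subgroup.mem_top γ
        induction hγ using Subgroup.closure_induction with
        | mem t ht =>
          exact hSH _ (by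
            simp only [hS, Finset.mem_union, Finset.mem_image]
            exact Or.inr ⟨t, ht, rfl⟩)
        | one => rw [he]; simpa [one_smul] using H.zero_mem
        | mul x y _ _ hx hy =>
          have key : e ((x * y) • c₀)
              = Finsupp.mapDomain (fun c => x • c) (e (y • c₀)) + e (x • c₀) := by
            rw [hmape, he]
            simp only [smul_smul]
            abel
          rw [key]
          exact H.add_mem (hstab _ _ hy) hx
        | inv x _ hx =>
          have key : e (x⁻¹ • c₀)
              = -(Finsupp.mapDomain (fun c => x⁻¹ • c) (e (x • c₀))) := by
            rw [hmape, he]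
            simp only [smul_smul, inv_mul_cancel, one_smul]
            abel
          rw [key]
          exact H.neg_mem (hstab _ _ hx)
      -- every elementary difference is in H
      have hkey : ∀ c : C, e c ∈ H := by
        intro c
        set q : MulAction.orbitRel.Quotient Γ C := Quotient.mk'' c with hq
        have hout : (Quotient.mk'' q.out : MulAction.orbitRel.Quotient Γ C) = Quotient.mk'' c := by
          rw [hq]; exact Quotient.out_eq' _
        have horbit : q.out ∈ MulAction.orbit Γ c := Quotient.eq''.mp hout
        obtain ⟨γ, hγ⟩ := horbit
        -- γ • c = q.out, so c = γ⁻¹ • q.out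
        have hc : c = γ⁻¹ • q.out := by rw [← hγ, inv_smul_smul]
        have key : e c = Finsupp.mapDomain (fun x => γ⁻¹ • x) (e q.out) + e (γ⁻¹ • c₀) := by
          rw [hmape, he, hc]
          exact (sub_add_sub_cancel _ _ _).symm
        rw [key]
        refine H.add_mem ?_ (hA _)
        refine hgen _ _ ?_
        simp only [hS, Finset.mem_union, Finset.mem_image]
        exact Or.inl ⟨q, Finset.mem_univ _, rfl⟩
      intro D hD
      have hrepr : D = ∑ c ∈ D.support, D c • e c := by
        rw [he]
        have h1 : ∑ c ∈ D.support, D c • (Finsupp.single c 1 - Finsupp.single c₀ 1)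
            = (∑ c ∈ D.support, D c • Finsupp.single c (1 : ℤ))
              - (∑ c ∈ D.support, D c) • Finsupp.single c₀ (1 : ℤ) := by
          rw [Finset.sum_smul, ← Finset.sum_sub_distrib]
          exact Finset.sum_congr rfl fun c _ => smul_sub _ _ _
        rw [h1]
        have h2 : ∀ c : C, D c • Finsupp.single c (1 : ℤ) = Finsupp.single c (D c) := by
          intro c; rw [Finsupp.smul_single]; norm_num
        simp only [h2]
        have h3 : ∑ c ∈ D.support, Finsupp.single c (D c) = D := Finsupp.sum_single D
        rw [h3]
        have h4 : ∑ c ∈ D.support, D c = 0 := hD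
        rw [h4]
        simp
      rw [hrepr]
      exact AddSubgroup.sum_mem _ fun c _ => AddSubgroup.zsmul_mem _ (hkey c) _
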